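/- Let S be a binary string ending in 1, written S = 0^{x₁−1}1 0^{x₂−1}1 ··· 0^{x_m−1}1 with each x_i ≥ 1, and let S' = x₁ x₂ ··· x_m (a string over positive integers). If S has a string attractor Γ of size γ, then S' has a string attractor of size at most 2γ + 1. An explicit such attractor is Γ' = {1} ∪ {r(i), r(i)+1 : i ∈ Γ} ∩ {1,…,m}, where r(i) = rank₁(S, i) + 1 if S[i] = 0 and r(i) = rank₁(S, i) if S[i] = 1. -/

import Mathlib

/-- `Γ` is a string attractor of `S` (positions are 1-based, substrings given by
0-based start `a` and length `ℓ ≥ 1`). -/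
def IsAttractor {α : Type*} (S : List α) (Γ : Set ℕ) : Prop :=
  (∀ p ∈ Γ, 1 ≤ p ∧ p ≤ S.length) ∧
  ∀ a ℓ : ℕ, 1 ≤ ℓ → a + ℓ ≤ S.length →
    ∃ a', a' + ℓ ≤ S.length ∧ (S.drop a').take ℓ = (S.drop a).take ℓ ∧
      ∃ p ∈ Γ, a' + 1 ≤ p ∧ p ≤ a' + ℓ

/-- Number of 1s among the first `i` characters of a binary string. -/
def rank1 (S : List Bool) (i : ℕ) : ℕ := (S.take i).count true

/-- The binary string S = 0^{x₁−1}1 0^{x₂−1}1 ··· 0^{x_m−1}1 encoded by the gaps `xs`. -/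
def gapString (xs : List ℕ) : List Bool :=
  xs.flatMap (fun x => List.replicate (x - 1) false ++ [true])

/-- r(i) = rank₁(S,i) + 1 if S[i] = 0, and r(i) = rank₁(S,i) if S[i] = 1. -/
def rPos (S : List Bool) (i : ℕ) : ℕ :=
  if S.getD (i - 1) false = true then rank1 S i else rank1 S i + 1

open List

lemma gap_append (as bs : List ℕ) : gapString (as ++ bs) = gapString as ++ gapString bs :=
  List.flatMap_append ..

lemma gap_cons (x : ℕ) (xs : List ℕ) :
    gapString (x :: xs) = replicate (x - 1) false ++ true :: gapString xs := by
  simp [gapString]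

lemma gap_len (xs : List ℕ) (hpos : ∀ x ∈ xs, 1 ≤ x) : (gapString xs).length = xs.sum := by
  induction xs with
  | nil => simp [gapString]
  | cons x xs ih =>
    have hx := hpos x (by simp)
    rw [gap_cons]
    simp [ih (fun y hy => hpos y (by simp [hy]))]
    omega

lemma gap_count (xs : List ℕ) : (gapString xs).count true = xs.length := by
  induction xs with
  | nil => simp [gapString]
  | cons x xs ih => rw [gap_cons]; simp [List.count_append, ih, List.count_replicate]

lemma gap_split (xs : List ℕ) (k : ℕ) :
    gapString xs = gapString (xs.take k) ++ gapString (xs.drop k) := by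
  rw [← gap_append, take_append_drop]

lemma gap_drop (xs : List ℕ) (hpos : ∀ x ∈ xs, 1 ≤ x) (k : ℕ) :
    (gapString xs).drop ((xs.take k).sum) = gapString (xs.drop k) := by
  conv_lhs => rw [gap_split xs k]
  rw [← gap_len (xs.take k) (fun y hy => hpos y (mem_of_mem_take hy)), drop_left]

lemma gap_take (xs : List ℕ) (hpos : ∀ x ∈ xs, 1 ≤ x) (k : ℕ) :
    (gapString xs).take ((xs.take k).sum) = gapString (xs.take k) := by
  conv_lhs => rw [gap_split xs k]
  rw [← gap_len (xs.take k) (fun y hy => hpos y (mem_of_mem_take hy)), take_left]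

lemma sigma_add (xs : List ℕ) (j d : ℕ) :
    (xs.take (j + d)).sum = (xs.take j).sum + ((xs.drop j).take d).sum := by
  rw [take_add, sum_append]

lemma sigma_mono (xs : List ℕ) {j k : ℕ} (h : j ≤ k) :
    (xs.take j).sum ≤ (xs.take k).sum := by
  obtain ⟨d, rfl⟩ := Nat.exists_eq_add_of_le h
  rw [sigma_add]; omega

lemma sigma_strict (xs : List ℕ) (hpos : ∀ x ∈ xs, 1 ≤ x) {j : ℕ} (h : j < xs.length) :
    (xs.take j).sum < (xs.take (j + 1)).sum := by
  rw [sum_take_succ xs j h]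
  have := hpos xs[j] (by exact getElem_mem h)
  omega

lemma len_le_sum (xs : List ℕ) (hpos : ∀ x ∈ xs, 1 ≤ x) : xs.length ≤ xs.sum := by
  induction xs with
  | nil => simp
  | cons x xs ih =>
    have := hpos x (by simp)
    have := ih (fun y hy => hpos y (by simp [hy]))
    simp; omega

lemma gap_getElem?_true (xs : List ℕ) (hpos : ∀ x ∈ xs, 1 ≤ x) (k : ℕ) (hk : k < xs.length) :
    (gapString xs)[(xs.take k).sum + (xs[k] - 1)]? = some true := by
  rw [gap_split xs k, getElem?_append_right
    (by rw [gap_len (xs.take k) (fun y hy => hpos y (mem_of_mem_take hy))]; omega),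
    gap_len (xs.take k) (fun y hy => hpos y (mem_of_mem_take hy))]
  rw [drop_eq_getElem_cons hk, gap_cons]
  rw [Nat.add_sub_cancel_left, getElem?_append_right (by simp), length_replicate]
  simp

lemma gap_getElem?_false (xs : List ℕ) (hpos : ∀ x ∈ xs, 1 ≤ x) (k : ℕ) (hk : k < xs.length)
    (t : ℕ) (ht : t < xs[k] - 1) :
    (gapString xs)[(xs.take k).sum + t]? = some false := by
  rw [gap_split xs k, getElem?_append_right
    (by rw [gap_len (xs.take k) (fun y hy => hpos y (mem_of_mem_take hy))]; omega),
    gap_len (xs.take k) (fun y hy => hpos y (mem_of_mem_take hy))]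
  rw [drop_eq_getElem_cons hk, gap_cons]
  rw [Nat.add_sub_cancel_left, getElem?_append_left (by simpa using ht)]
  simp [ht]

lemma gap_rank (xs : List ℕ) (hpos : ∀ x ∈ xs, 1 ≤ x) (k : ℕ) (hk : k < xs.length)
    (t : ℕ) (ht : t < xs[k]) :
    rank1 (gapString xs) ((xs.take k).sum + t + 1) = if t = xs[k] - 1 then k + 1 else k := by
  have hlen : (gapString (xs.take k)).length = (xs.take k).sum :=
    gap_len (xs.take k) (fun y hy => hpos y (mem_of_mem_take hy))
  unfold rank1
  rw [gap_split xs k, take_append, hlen]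
  rw [take_of_length_le (by omega), count_append]
  have h1 : (gapString (xs.take k)).count true = k := by
    rw [gap_count, length_take]; omega
  rw [h1]
  rw [drop_eq_getElem_cons hk, gap_cons]
  have harith : (xs.take k).sum + t + 1 - (xs.take k).sum = t + 1 := by omega
  rw [harith, take_append, take_replicate, length_replicate]
  rw [count_append]
  by_cases hcase : t = xs[k] - 1
  · have h3 : t + 1 - (xs[k] - 1) = 1 := by omega
    rw [h3, if_pos hcase]
    simp [List.count_replicate]
  · have h3 : t + 1 - (xs[k] - 1) = 0 := by omega
    rw [h3, if_neg hcase]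
    simp [List.count_replicate]


lemma gap_rPos (xs : List ℕ) (hpos : ∀ x ∈ xs, 1 ≤ x) (k : ℕ) (hk : k < xs.length)
    (t : ℕ) (ht : t < xs[k]) :
    rPos (gapString xs) ((xs.take k).sum + t + 1) = k + 1 := by
  unfold rPos
  have harith : (xs.take k).sum + t + 1 - 1 = (xs.take k).sum + t := by omega
  rw [harith, getD_eq_getElem?_getD]
  by_cases hcase : t = xs[k] - 1
  · subst hcase
    rw [gap_getElem?_true xs hpos k hk]
    simp [gap_rank xs hpos k hk _ ht]
  · rw [gap_getElem?_false xs hpos k hk t (by omega)]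
    simp [gap_rank xs hpos k hk t ht, hcase]

lemma decomp (xs : List ℕ) (hpos : ∀ x ∈ xs, 1 ≤ x) (p : ℕ) (h1 : 1 ≤ p) (h2 : p ≤ xs.sum) :
    ∃ k, ∃ hk : k < xs.length, ∃ t, t < xs[k] ∧ p = (xs.take k).sum + t + 1 := by
  induction xs generalizing p with
  | nil => simp at h2; omega
  | cons x xs ih =>
    by_cases h : p ≤ x
    · exact ⟨0, by simp, p - 1, by simpa using (by omega : p - 1 < x), by simp; omega⟩
    · obtain ⟨k, hk, t, ht, hp⟩ := ih (fun y hy => hpos y (by simp [hy]))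
        (p - x) (by omega) (by simp at h2; omega)
      refine ⟨k + 1, by simpa using hk, t, by simpa using ht, ?_⟩
      simp only [take_succ_cons, sum_cons]
      omega

lemma prefix_aux (a : ℕ) : ∀ (b : ℕ) (l1 l2 : List Bool),
    (replicate a false ++ true :: l1 <+: replicate b false ++ true :: l2) →
    a = b ∧ l1 <+: l2 := by
  induction a with
  | zero =>
    intro b l1 l2 h
    cases b with
    | zero => simpa [cons_prefix_cons] using h
    | succ b => simp [replicate_succ, cons_prefix_cons] at h
  | succ a ih =>
    intro b l1 l2 h
    cases b with
    | zero => simp [replicate_succ, cons_prefix_cons] at h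
    | succ b =>
      rw [replicate_succ, replicate_succ, cons_append, cons_append, cons_prefix_cons] at h
      obtain ⟨ha, hl⟩ := ih b l1 l2 h.2
      exact ⟨by omega, hl⟩

lemma gap_prefix (zs : List ℕ) : ∀ (ys : List ℕ), (∀ x ∈ zs, 1 ≤ x) → (∀ x ∈ ys, 1 ≤ x) →
    (gapString zs <+: gapString ys) → zs <+: ys := by
  induction zs with
  | nil => intro ys _ _ _; exact nil_prefix
  | cons z zs ih =>
    intro ys hz hy h
    cases ys with
    | nil =>
      exfalso
      rw [gap_cons] at h
      have := h.length_le
      simp [gapString] at this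
    | cons y ys =>
      rw [gap_cons, gap_cons] at h
      obtain ⟨he, h2⟩ := prefix_aux _ _ _ _ h
      have hzy : z = y := by
        have := hz z (by simp); have := hy y (by simp); omega
      rw [hzy, cons_prefix_cons]
      exact ⟨rfl, ih ys (fun x hx => hz x (by simp [hx])) (fun x hx => hy x (by simp [hx])) h2⟩

theorem stmt9 (xs : List ℕ) (hxs : xs ≠ []) (hpos : ∀ x ∈ xs, 1 ≤ x)
    (Γ : Finset ℕ) (hΓ : IsAttractor (gapString xs) (↑Γ : Set ℕ)) :
    IsAttractor xs
      (↑(insert 1 ((Γ.biUnion (fun i => ({rPos (gapString xs) i,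
            rPos (gapString xs) i + 1} : Finset ℕ))).filter
          (fun p => 1 ≤ p ∧ p ≤ xs.length))) : Set ℕ) ∧
    (insert 1 ((Γ.biUnion (fun i => ({rPos (gapString xs) i,
          rPos (gapString xs) i + 1} : Finset ℕ))).filter
        (fun p => 1 ≤ p ∧ p ≤ xs.length))).card ≤ 2 * Γ.card + 1 := by
  have hm : 1 ≤ xs.length := List.length_pos_iff.mpr hxs
  have hSlen : (gapString xs).length = xs.sum := gap_len xs hpos
  constructor
  · constructor
    · intro p hp
      simp only [Finset.coe_insert, Set.mem_insert_iff, Finset.mem_coe,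
        Finset.mem_filter] at hp
      rcases hp with rfl | ⟨_, h1, h2⟩
      · exact ⟨le_refl 1, hm⟩
      · exact ⟨h1, h2⟩
    · intro a ℓ hℓ hlen
      by_cases ha : a = 0
      · subst ha
        refine ⟨0, by simpa using hlen, rfl, 1, ?_, le_refl 1, by omega⟩
        simp
      · -- main case : a ≥ 1
        have ha1 : 1 ≤ a := by omega
        set ts := (xs.drop a).take ℓ with hts
        have hts_pos : ∀ x ∈ ts, 1 ≤ x := fun x hx =>
          hpos x (mem_of_mem_drop (mem_of_mem_take hx))
        have htslen : ts.length = ℓ := by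
          rw [hts, length_take, length_drop]; omega
        set L := 1 + ts.sum with hL
        have hσal : (xs.take (a + ℓ)).sum = (xs.take a).sum + ts.sum := sigma_add xs a ℓ
        have hσm : (xs.take xs.length).sum = xs.sum := by rw [take_length]
        have hσa_le : (xs.take (a + ℓ)).sum ≤ xs.sum := by
          have := sigma_mono xs hlen; omega
        have hσa_pos : 1 ≤ (xs.take a).sum := by
          have h1 := len_le_sum (xs.take a) (fun y hy => hpos y (mem_of_mem_take hy))
          rw [length_take] at h1; omega
        -- the pattern W
        have hdropA : (gapString xs).drop ((xs.take a).sum - 1)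
            = true :: gapString (xs.drop a) := by
          have h1 : (xs.take a).sum - 1 < (gapString xs).length := by
            rw [hSlen]; omega
          rw [drop_eq_getElem_cons h1]
          have h2 := gap_drop xs hpos a
          have h3 : ((xs.take a).sum - 1) + 1 = (xs.take a).sum := by omega
          rw [h3, h2]
          congr 1
          have hk : a - 1 < xs.length := by omega
          have hx := hpos xs[a-1] (getElem_mem hk)
          have h4 := gap_getElem?_true xs hpos (a-1) hk
          have h5 := sum_take_succ xs (a-1) hk
          rw [show a - 1 + 1 = a from by omega] at h5
          rw [show (xs.take (a-1)).sum + (xs[a-1] - 1) = (xs.take a).sum - 1 from by omega] at h4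
          rw [getElem?_eq_getElem h1] at h4
          exact Option.some.inj h4
        have hW : ((gapString xs).drop ((xs.take a).sum - 1)).take L
            = true :: gapString ts := by
          rw [hdropA, show L = ts.sum + 1 from by omega, take_succ_cons]
          congr 1
          have := gap_take (xs.drop a) (fun y hy => hpos y (mem_of_mem_drop hy)) ℓ
          rw [← hts] at this
          exact this
        obtain ⟨a', ha'L, heq, p, hpΓ, hp1, hp2⟩ := hΓ.2 ((xs.take a).sum - 1) L
          (by omega) (by rw [hSlen]; omega)
        rw [hW] at heq
        have ha'sum : a' + L ≤ xs.sum := by rw [hSlen] at ha'L; exact ha'L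
        have hfirst : (gapString xs)[a']? = some true := by
          have h0 := congrArg (fun l => l[0]?) heq
          simp only [getElem?_take, getElem?_drop] at h0
          rw [if_pos (show (0:ℕ) < L from by omega)] at h0
          simpa using h0
        obtain ⟨k, hk, t, ht, hdk⟩ := decomp xs hpos (a' + 1) (by omega) (by omega)
        have ha'eq : a' = (xs.take k).sum + t := by omega
        have hteq : t = xs[k] - 1 := by
          by_contra hne
          have h6 := gap_getElem?_false xs hpos k hk t (by omega)
          rw [← ha'eq] at h6
          rw [h6] at hfirst
          simp at hfirst
        set b := k + 1 with hb
        have hσb : (xs.take b).sum = a' + 1 := by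
          rw [hb]
          have h7 := sum_take_succ xs k hk
          have hx := hpos xs[k] (getElem_mem hk)
          omega
        have hdrop1 : (gapString xs).drop (a' + 1) = gapString (xs.drop b) := by
          rw [← hσb]; exact gap_drop xs hpos b
        have hlt : a' < (gapString xs).length := by rw [hSlen]; omega
        have heq2 : ((gapString xs).drop (a' + 1)).take ts.sum = gapString ts := by
          rw [drop_eq_getElem_cons hlt, show L = ts.sum + 1 from by omega,
            take_succ_cons] at heq
          exact (List.cons_eq_cons.mp heq).2
        have hpre : gapString ts <+: gapString (xs.drop b) := by
          rw [← hdrop1, ← heq2]; exact take_prefix _ _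
        have hts_pre : ts <+: xs.drop b :=
          gap_prefix ts (xs.drop b) hts_pos (fun x hx => hpos x (mem_of_mem_drop hx)) hpre
        have hblen : b + ℓ ≤ xs.length := by
          have h8 := hts_pre.length_le
          rw [htslen, length_drop] at h8
          omega
        have hocc : (xs.drop b).take ℓ = (xs.drop a).take ℓ := by
          have h9 := prefix_iff_eq_take.mp hts_pre
          rw [htslen] at h9
          rw [← h9]
        have hσbl : (xs.take (b + ℓ)).sum = a' + L := by
          have h10 := sigma_add xs b ℓ
          rw [hocc, ← hts] at h10
          omega
        obtain ⟨k', hk', t', ht', hpdec⟩ := decomp xs hpos p (by omega) (by omega)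
        have hr : rPos (gapString xs) p = k' + 1 := by
          rw [hpdec]; exact gap_rPos xs hpos k' hk' t' ht'
        have hsucc' := sum_take_succ xs k' hk'
        have hlow : b ≤ k' + 1 := by
          by_contra hcon
          push_neg at hcon
          have h1 : (xs.take (k'+1)).sum ≤ (xs.take (b-1)).sum := sigma_mono xs (by omega)
          have h2 : (xs.take (b-1)).sum < (xs.take b).sum := by
            have h2' := sigma_strict xs hpos (show b - 1 < xs.length from by omega)
            rw [show b - 1 + 1 = b from by omega] at h2'
            exact h2'
          omega
        have hhigh : k' + 1 ≤ b + ℓ := by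
          by_contra hcon
          push_neg at hcon
          have h1 : (xs.take (b+ℓ)).sum ≤ (xs.take k').sum := sigma_mono xs (by omega)
          omega
        refine ⟨b, hblen, hocc, ?_⟩
        have hmem : ∀ q, (q = rPos (gapString xs) p ∨ q = rPos (gapString xs) p + 1) →
            1 ≤ q → q ≤ xs.length →
            q ∈ (↑(insert 1 ((Γ.biUnion (fun i => ({rPos (gapString xs) i,
              rPos (gapString xs) i + 1} : Finset ℕ))).filter
              (fun p => 1 ≤ p ∧ p ≤ xs.length))) : Set ℕ) := by
          intro q hq h1 h2
          simp only [Finset.coe_insert, Set.mem_insert_iff, Finset.mem_coe,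
            Finset.mem_filter, Finset.mem_biUnion, Finset.mem_insert, Finset.mem_singleton]
          exact Or.inr ⟨⟨p, hpΓ, hq⟩, h1, h2⟩
        by_cases hrb : k' + 1 = b
        · exact ⟨rPos (gapString xs) p + 1, hmem _ (Or.inr rfl) (by omega) (by omega),
            by omega, by omega⟩
        · exact ⟨rPos (gapString xs) p, hmem _ (Or.inl rfl) (by omega) (by omega),
            by omega, by omega⟩
  · have h2 := Finset.card_filter_le (Γ.biUnion (fun i => ({rPos (gapString xs) i,
      rPos (gapString xs) i + 1} : Finset ℕ))) (fun p => 1 ≤ p ∧ p ≤ xs.length)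
    have h3 := Finset.card_biUnion_le (s := Γ)
      (t := fun i => ({rPos (gapString xs) i, rPos (gapString xs) i + 1} : Finset ℕ))
    have h4 : ∑ i ∈ Γ, ({rPos (gapString xs) i, rPos (gapString xs) i + 1} : Finset ℕ).card
        ≤ Γ.card • 2 :=
      Finset.sum_le_card_nsmul _ _ 2 (fun x _ =>
        (Finset.card_insert_le _ _).trans (by simp))
    have h5 := Finset.card_insert_le 1 ((Γ.biUnion (fun i => ({rPos (gapString xs) i,
      rPos (gapString xs) i + 1} : Finset ℕ))).filter (fun p => 1 ≤ p ∧ p ≤ xs.length))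
    simp only [smul_eq_mul] at h4
    omega
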